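/- Numerical range nonsingularity condition: let A, B ∈ ℂ^{n×n} with A invertible. If the numerical range W(A⁻¹) is disjoint from −W(B) (i.e., W(A⁻¹) ∩ {−z : z ∈ W(B)} = ∅), then I + A U* B U is nonsingular for every unitary U. -/

import Mathlib

open Matrix

noncomputable def numRange {n : ℕ} (A : Matrix (Fin n) (Fin n) ℂ) : Set ℂ :=
  {z | ∃ x : EuclideanSpace ℂ (Fin n), ‖x‖ = 1 ∧
    z = (inner ℂ x (Matrix.toEuclideanLin A x) : ℂ)}

lemma inner_toEuclideanLin_eq {n : ℕ} (M : Matrix (Fin n) (Fin n) ℂ) (x : Fin n → ℂ) :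
    (inner ℂ ((WithLp.equiv 2 (Fin n → ℂ)).symm x)
      (Matrix.toEuclideanLin M ((WithLp.equiv 2 (Fin n → ℂ)).symm x)) : ℂ)
      = star x ⬝ᵥ M *ᵥ x := dotProduct_comm _ _

lemma mem_numRange_of {n : ℕ} (M : Matrix (Fin n) (Fin n) ℂ) (x : Fin n → ℂ) (hx : x ≠ 0) :
    (((‖(WithLp.equiv 2 (Fin n → ℂ)).symm x‖ : ℂ))^2)⁻¹ * (star x ⬝ᵥ M *ᵥ x) ∈ numRange M := by
  set w : EuclideanSpace ℂ (Fin n) := (WithLp.equiv 2 (Fin n → ℂ)).symm x with hw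
  have hw0 : w ≠ 0 := by
    simpa [hw] using hx
  have hwn : ‖w‖ ≠ 0 := norm_ne_zero_iff.mpr hw0
  refine ⟨(‖w‖ : ℂ)⁻¹ • w, ?_, ?_⟩
  · rw [norm_smul]
    simp [hwn, abs_of_nonneg (norm_nonneg w)]
  · rw [LinearMap.map_smul, inner_smul_left, inner_smul_right, inner_toEuclideanLin_eq,
      map_inv₀, Complex.conj_ofReal]
    ring

/-- Numerical range condition: W(A⁻¹) ∩ (−W(B)) = ∅ implies I + AU*BU
nonsingular for every unitary U. -/
theorem stmt18 {n : ℕ} (A B : Matrix (Fin n) (Fin n) ℂ) (hA : IsUnit A)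
    (h : numRange A⁻¹ ∩ ((fun z => -z) '' numRange B) = ∅) :
    ∀ U : Matrix (Fin n) (Fin n) ℂ, Uᴴ * U = 1 → IsUnit (1 + A * Uᴴ * B * U) := by
  intro U hU
  by_contra hM
  have hdet : (1 + A * Uᴴ * B * U).det = 0 := by
    by_contra hd
    exact hM ((Matrix.isUnit_iff_isUnit_det _).mpr (isUnit_iff_ne_zero.mpr hd))
  obtain ⟨x, hx0, hx⟩ := Matrix.exists_mulVec_eq_zero_iff.mpr hdet
  -- key algebraic identities
  have hAinv : A⁻¹ * A = 1 := Matrix.nonsing_inv_mul A (A.isUnit_iff_isUnit_det.mp hA)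
  have hx' : x = -((A * Uᴴ * B * U) *ᵥ x) := by
    have := hx
    rw [Matrix.add_mulVec, Matrix.one_mulVec] at this
    linear_combination (norm := module) this
  have hkey : A⁻¹ *ᵥ x = -((Uᴴ * B * U) *ᵥ x) := by
    calc A⁻¹ *ᵥ x = A⁻¹ *ᵥ (-((A * Uᴴ * B * U) *ᵥ x)) := by rw [← hx']
    _ = -((A⁻¹ * (A * Uᴴ * B * U)) *ᵥ x) := by rw [Matrix.mulVec_neg, Matrix.mulVec_mulVec]
    _ = -((Uᴴ * B * U) *ᵥ x) := by
        congr 1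
        rw [show A * Uᴴ * B * U = A * (Uᴴ * B * U) by rw [mul_assoc A Uᴴ B, mul_assoc], ← mul_assoc, hAinv, one_mul]
  -- Ux is nonzero
  have hUx0 : U *ᵥ x ≠ 0 := by
    intro h0
    apply hx0
    have : (Uᴴ * U) *ᵥ x = 0 := by rw [← Matrix.mulVec_mulVec, h0, Matrix.mulVec_zero]
    rwa [hU, Matrix.one_mulVec] at this
  -- norms agree
  have hinner : star (U *ᵥ x) ⬝ᵥ (B *ᵥ (U *ᵥ x)) = star x ⬝ᵥ ((Uᴴ * B * U) *ᵥ x) := by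
    rw [Matrix.star_mulVec, Matrix.mulVec_mulVec, Matrix.dotProduct_mulVec,
      Matrix.vecMul_vecMul, ← Matrix.dotProduct_mulVec]
    rw [← mul_assoc]
  have hnorm : ‖(WithLp.equiv 2 (Fin n → ℂ)).symm (U *ᵥ x)‖
      = ‖(WithLp.equiv 2 (Fin n → ℂ)).symm x‖ := by
    have e1 : (inner ℂ ((WithLp.equiv 2 (Fin n → ℂ)).symm (U *ᵥ x))
        ((WithLp.equiv 2 (Fin n → ℂ)).symm (U *ᵥ x)) : ℂ)
        = ((‖(WithLp.equiv 2 (Fin n → ℂ)).symm (U *ᵥ x)‖ : ℂ))^2 :=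
      inner_self_eq_norm_sq_to_K _
    have e2 : (inner ℂ ((WithLp.equiv 2 (Fin n → ℂ)).symm x)
        ((WithLp.equiv 2 (Fin n → ℂ)).symm x) : ℂ)
        = ((‖(WithLp.equiv 2 (Fin n → ℂ)).symm x‖ : ℂ))^2 :=
      inner_self_eq_norm_sq_to_K _
    have h1 : ((‖(WithLp.equiv 2 (Fin n → ℂ)).symm (U *ᵥ x)‖ : ℂ))^2
        = ((‖(WithLp.equiv 2 (Fin n → ℂ)).symm x‖ : ℂ))^2 := by
      rw [← e1, ← e2]
      show (U *ᵥ x) ⬝ᵥ star (U *ᵥ x) = x ⬝ᵥ star x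
      rw [dotProduct_comm, dotProduct_comm x]
      rw [Matrix.star_mulVec, Matrix.dotProduct_mulVec, Matrix.vecMul_vecMul, hU,
        Matrix.vecMul_one]
    have h2 : (‖(WithLp.equiv 2 (Fin n → ℂ)).symm (U *ᵥ x)‖)^2
        = (‖(WithLp.equiv 2 (Fin n → ℂ)).symm x‖)^2 := by
      exact_mod_cast h1
    nlinarith [norm_nonneg ((WithLp.equiv 2 (Fin n → ℂ)).symm (U *ᵥ x)),
      norm_nonneg ((WithLp.equiv 2 (Fin n → ℂ)).symm x), h2]
  -- the two numerical range elements
  have hz1 := mem_numRange_of A⁻¹ x hx0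
  have hz2 := mem_numRange_of B (U *ᵥ x) hUx0
  rw [hnorm, hinner] at hz2
  have hz12 : (((‖(WithLp.equiv 2 (Fin n → ℂ)).symm x‖ : ℂ))^2)⁻¹ * (star x ⬝ᵥ A⁻¹ *ᵥ x)
      = -((((‖(WithLp.equiv 2 (Fin n → ℂ)).symm x‖ : ℂ))^2)⁻¹
        * (star x ⬝ᵥ ((Uᴴ * B * U) *ᵥ x))) := by
    rw [hkey, dotProduct_neg]
    ring
  have : (((‖(WithLp.equiv 2 (Fin n → ℂ)).symm x‖ : ℂ))^2)⁻¹ * (star x ⬝ᵥ A⁻¹ *ᵥ x)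
      ∈ numRange A⁻¹ ∩ ((fun z => -z) '' numRange B) := by
    refine ⟨hz1, ⟨_, hz2, ?_⟩⟩
    rw [hz12]
  rw [h] at this
  exact this
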